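/- The order-consistency of the iterative softmax top-k relaxation can fail for temperatures below 1: with n = 2, keys r̂_1 = e and r̂_2 = e², k = 2, and temperature t = 2/5, the relaxed k-hot outputs satisfy a_1 > a_2 even though r̂_1 < r̂_2. -/

import Mathlib

/-- Tempered softmax of logits `α : Fin n → ℝ` at temperature `t`. -/
noncomputable def softmaxT {n : ℕ} (t : ℝ) (α : Fin n → ℝ) (i : Fin n) : ℝ :=
  Real.exp (α i / t) / ∑ m, Real.exp (α m / t)

/-- Logits of the iterative softmax top-k relaxation: `alphaIter t r j` is `α^{j+1}`
(the logits used at the `(j+1)`-th step, 0-indexed). -/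
noncomputable def alphaIter {n : ℕ} (t : ℝ) (r : Fin n → ℝ) : ℕ → Fin n → ℝ
  | 0 => fun i => Real.log (r i)
  | j + 1 => fun i =>
      alphaIter t r j i + Real.log (1 - softmaxT t (alphaIter t r j) i)

/-- `pIter t r j i` is the softmax value `p_i^{j+1}` at the `(j+1)`-th step (0-indexed `j`). -/
noncomputable def pIter {n : ℕ} (t : ℝ) (r : Fin n → ℝ) (j : ℕ) (i : Fin n) : ℝ :=
  softmaxT t (alphaIter t r j) i

/-- Order-consistency can fail for `t < 1`: with keys `r̂ = [e, e²]`, `k = 2` and `t = 2/5`,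
the relaxed `k`-hot outputs satisfy `a₁ > a₂` even though `r̂₁ < r̂₂`. -/
theorem relaxedTopK_inconsistent_low_temperature :
    (![Real.exp 1, Real.exp 2] : Fin 2 → ℝ) 0 < (![Real.exp 1, Real.exp 2] : Fin 2 → ℝ) 1 ∧
      ∑ j ∈ Finset.range 2, pIter (2 / 5) ![Real.exp 1, Real.exp 2] j 1 <
        ∑ j ∈ Finset.range 2, pIter (2 / 5) ![Real.exp 1, Real.exp 2] j 0 := by
  have hS : (0:ℝ) < Real.exp (5/2) + Real.exp 5 := by positivity
  set S : ℝ := Real.exp (5/2) + Real.exp 5 with hSdef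
  have hα0 : alphaIter (2/5) ![Real.exp 1, Real.exp 2] 0 = ![1, 2] := by
    funext i
    fin_cases i <;> simp [alphaIter]
  have hsum0 : ∑ m, Real.exp ((![1, 2] : Fin 2 → ℝ) m / (2/5)) = S := by
    rw [Fin.sum_univ_two]
    norm_num
    exact hSdef.symm
  have hp00 : pIter (2/5) ![Real.exp 1, Real.exp 2] 0 0 = Real.exp (5/2) / S := by
    rw [pIter, hα0, softmaxT, hsum0]
    norm_num
  have hp01 : pIter (2/5) ![Real.exp 1, Real.exp 2] 0 1 = Real.exp 5 / S := by
    rw [pIter, hα0, softmaxT, hsum0]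
    norm_num
  -- second-step logits
  have hl0 : (1 : ℝ) - Real.exp (5/2) / S = Real.exp 5 / S := by
    field_simp
    rw [hSdef]; ring
  have hl1 : (1 : ℝ) - Real.exp 5 / S = Real.exp (5/2) / S := by
    field_simp
    rw [hSdef]; ring
  have hα1 : alphaIter (2/5) ![Real.exp 1, Real.exp 2] 1 =
      ![6 - Real.log S, 9/2 - Real.log S] := by
    funext i
    have h0 := hp00
    have h1 := hp01
    rw [pIter] at h0 h1
    fin_cases i
    · show alphaIter (2/5) ![Real.exp 1, Real.exp 2] 0 0 +
        Real.log (1 - softmaxT (2/5) (alphaIter (2/5) ![Real.exp 1, Real.exp 2] 0) 0) = _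
      rw [hα0] at h0 ⊢
      rw [h0, hl0, Real.log_div (Real.exp_ne_zero 5) (ne_of_gt hS), Real.log_exp]
      show (1 : ℝ) + (5 - Real.log S) = 6 - Real.log S
      ring
    · show alphaIter (2/5) ![Real.exp 1, Real.exp 2] 0 1 +
        Real.log (1 - softmaxT (2/5) (alphaIter (2/5) ![Real.exp 1, Real.exp 2] 0) 1) = _
      rw [hα0] at h1 ⊢
      rw [h1, hl1, Real.log_div (Real.exp_ne_zero (5/2)) (ne_of_gt hS), Real.log_exp]
      show (2 : ℝ) + (5/2 - Real.log S) = 9/2 - Real.log S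
      ring
  have hT : (0:ℝ) < Real.exp 15 + Real.exp (45/4) := by positivity
  set T : ℝ := Real.exp 15 + Real.exp (45/4) with hTdef
  have hc : (0:ℝ) < Real.exp ((5/2) * Real.log S) := Real.exp_pos _
  have hexp0 : Real.exp ((6 - Real.log S) / (2/5)) =
      Real.exp 15 / Real.exp ((5/2) * Real.log S) := by
    rw [← Real.exp_sub]
    ring_nf
  have hexp1 : Real.exp ((9/2 - Real.log S) / (2/5)) =
      Real.exp (45/4) / Real.exp ((5/2) * Real.log S) := by
    rw [← Real.exp_sub]
    ring_nf
  have hsum1 : ∑ m, Real.exp ((![6 - Real.log S, 9/2 - Real.log S] : Fin 2 → ℝ) m / (2/5)) =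
      T / Real.exp ((5/2) * Real.log S) := by
    rw [Fin.sum_univ_two]
    show Real.exp ((6 - Real.log S) / (2/5)) + Real.exp ((9/2 - Real.log S) / (2/5)) = _
    rw [hexp0, hexp1, ← add_div]
  have hp10 : pIter (2/5) ![Real.exp 1, Real.exp 2] 1 0 = Real.exp 15 / T := by
    rw [pIter, hα1, softmaxT, hsum1]
    show Real.exp ((6 - Real.log S) / (2/5)) / _ = _
    rw [hexp0]
    rw [div_div_div_eq]
    field_simp
  have hp11 : pIter (2/5) ![Real.exp 1, Real.exp 2] 1 1 = Real.exp (45/4) / T := by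
    rw [pIter, hα1, softmaxT, hsum1]
    show Real.exp ((9/2 - Real.log S) / (2/5)) / _ = _
    rw [hexp1]
    rw [div_div_div_eq]
    field_simp
  constructor
  · show Real.exp 1 < Real.exp 2
    exact Real.exp_lt_exp.mpr one_lt_two
  · rw [Finset.sum_range_succ, Finset.sum_range_succ, Finset.sum_range_zero,
      Finset.sum_range_succ, Finset.sum_range_succ, Finset.sum_range_zero,
      hp00, hp01, hp10, hp11]
    rw [zero_add, zero_add, div_add_div _ _ (ne_of_gt hS) (ne_of_gt hT),
      div_add_div _ _ (ne_of_gt hS) (ne_of_gt hT),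
      div_lt_div_iff₀ (by positivity) (by positivity)]
    have e1 : Real.exp 5 * Real.exp 15 = Real.exp 20 := by rw [← Real.exp_add]; norm_num
    have e2 : Real.exp 5 * Real.exp (45/4) = Real.exp (65/4) := by
      rw [← Real.exp_add]; norm_num
    have e3 : Real.exp (45/4) * Real.exp (5/2) = Real.exp (55/4) := by
      rw [← Real.exp_add]; norm_num
    have e4 : Real.exp (45/4) * Real.exp 5 = Real.exp (65/4) := by
      rw [← Real.exp_add]; norm_num
    have e5 : Real.exp (5/2) * Real.exp 15 = Real.exp (35/2) := by
      rw [← Real.exp_add]; norm_num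
    have e6 : Real.exp (5/2) * Real.exp (45/4) = Real.exp (55/4) := by
      rw [← Real.exp_add]; norm_num
    have e7 : Real.exp 15 * Real.exp (5/2) = Real.exp (35/2) := by
      rw [← Real.exp_add]; norm_num
    have e8 : Real.exp 15 * Real.exp 5 = Real.exp 20 := by rw [← Real.exp_add]; norm_num
    have key : Real.exp (65/4) < Real.exp (35/2) := Real.exp_lt_exp.mpr (by norm_num)
    have hcore : Real.exp 5 * T + S * Real.exp (45/4) <
        Real.exp (5/2) * T + S * Real.exp 15 := by
      rw [hSdef, hTdef]
      nlinarith [e1, e2, e3, e4, e5, e6, e7, e8, key]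
    exact mul_lt_mul_of_pos_right hcore (by positivity)
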